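/- arXiv:1907.03279 — 3 statements merged into one kernel-verified Lean document; each statement's English description precedes it below -/
import Mathlib

section
/- Consider the Euler–Lagrange system M(q)q̈ + C(q,q̇)q̇ + Dq̇ + G(q) = τ with M(q) symmetric positive definite, D symmetric positive semidefinite, the skew-symmetry property q̇ᵀ(½Ṁ(q) − C(q,q̇))q̇ = 0, and the control τ = psat(u, q̇) where u = G(q) − K_p q − K_d q̇ with K_p, K_d symmetric positive definite. Then the function V(q,q̇) = ½ q̇ᵀM(q)q̇ + ½ qᵀK_p q satisfies V̇ ≤ −q̇ᵀ(K_d + D)q̇ along system trajectories, where psat applies componentwise power saturation satisfying q̇ᵢ·psatᵢ ≤ q̇ᵢ·uᵢ componentwise when saturating. -/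
open Matrix

/-- Passivity-based control (PD plus gravity compensation) of an
Euler–Lagrange system under componentwise power saturation: the energy-based
Lyapunov function `V = ½ q̇ᵀM(q)q̇ + ½ qᵀK_p q` satisfies
`V̇ ≤ −q̇ᵀ(K_d + D)q̇` along system trajectories. -/
theorem passivity_lyapunov_decrease {n : ℕ}
    (M : (Fin n → ℝ) → Matrix (Fin n) (Fin n) ℝ)
    (Cor : ℝ → Matrix (Fin n) (Fin n) ℝ)
    (D Kp Kd : Matrix (Fin n) (Fin n) ℝ)
    (G : (Fin n → ℝ) → (Fin n → ℝ))
    (q dq ddq : ℝ → Fin n → ℝ)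
    (dM : ℝ → Matrix (Fin n) (Fin n) ℝ)
    (τ u : ℝ → Fin n → ℝ)
    (hMsymm : ∀ x, (M x).IsSymm) (hMpos : ∀ x, (M x).PosDef)
    (hDsymm : D.IsSymm) (hDpsd : D.PosSemidef)
    (hKpsymm : Kp.IsSymm) (hKppos : Kp.PosDef)
    (hKdsymm : Kd.IsSymm) (hKdpos : Kd.PosDef)
    (hq : ∀ t, HasDerivAt q (dq t) t)
    (hdq : ∀ t, HasDerivAt dq (ddq t) t)
    (hMt : ∀ t i j, HasDerivAt (fun s => M (q s) i j) (dM t i j) t)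
    (hskew : ∀ t, dq t ⬝ᵥ ((1 / 2 : ℝ) • dM t - Cor t) *ᵥ dq t = 0)
    (hdyn : ∀ t, M (q t) *ᵥ ddq t + Cor t *ᵥ dq t + D *ᵥ dq t + G (q t) = τ t)
    (hu : ∀ t, u t = G (q t) - Kp *ᵥ q t - Kd *ᵥ dq t)
    (hpsat : ∀ t i, dq t i * τ t i ≤ dq t i * u t i)
    (t : ℝ) :
    ∃ dV : ℝ,
      HasDerivAt
        (fun s => (1 / 2 : ℝ) * (dq s ⬝ᵥ M (q s) *ᵥ dq s)
          + (1 / 2 : ℝ) * (q s ⬝ᵥ Kp *ᵥ q s)) dV t ∧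
      dV ≤ -(dq t ⬝ᵥ (Kd + D) *ᵥ dq t) := by
  have hdqp : ∀ i, HasDerivAt (fun r => dq r i) (ddq t i) t := fun i =>
    (hasDerivAt_pi.mp (hdq t)) i
  have hqp : ∀ i, HasDerivAt (fun r => q r i) (dq t i) t := fun i =>
    (hasDerivAt_pi.mp (hq t)) i
  have h1 : HasDerivAt (fun s => dq s ⬝ᵥ M (q s) *ᵥ dq s)
      (∑ i, (ddq t i * ∑ j, M (q t) i j * dq t j
        + dq t i * ∑ j, (dM t i j * dq t j + M (q t) i j * ddq t j))) t := by
    simp only [dotProduct, mulVec]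
    exact HasDerivAt.fun_sum fun i _ =>
      ((hdqp i).mul (HasDerivAt.fun_sum fun j _ => ((hMt t i j).mul (hdqp j))))
  have h2 : HasDerivAt (fun s => q s ⬝ᵥ Kp *ᵥ q s)
      (∑ i, (dq t i * ∑ j, Kp i j * q t j
        + q t i * ∑ j, Kp i j * dq t j)) t := by
    simp only [dotProduct, mulVec]
    refine HasDerivAt.fun_sum fun i _ => (hqp i).mul ?_
    have := HasDerivAt.fun_sum fun j (_ : j ∈ Finset.univ) =>
      ((hasDerivAt_const t (Kp i j)).mul (hqp j))
    simpa using this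
  have e1 : (∑ i, (ddq t i * ∑ j, M (q t) i j * dq t j
        + dq t i * ∑ j, (dM t i j * dq t j + M (q t) i j * ddq t j)))
      = ddq t ⬝ᵥ M (q t) *ᵥ dq t + (dq t ⬝ᵥ dM t *ᵥ dq t + dq t ⬝ᵥ M (q t) *ᵥ ddq t) := by
    simp only [dotProduct, mulVec, Finset.mul_sum, mul_add, ← Finset.sum_add_distrib]
  have e2 : (∑ i, (dq t i * ∑ j, Kp i j * q t j + q t i * ∑ j, Kp i j * dq t j))
      = dq t ⬝ᵥ Kp *ᵥ q t + q t ⬝ᵥ Kp *ᵥ dq t := by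
    simp only [dotProduct, mulVec, ← Finset.sum_add_distrib]
  rw [e1] at h1; rw [e2] at h2
  refine ⟨_, (h1.const_mul ((1:ℝ)/2)).add (h2.const_mul ((1:ℝ)/2)), ?_⟩
  -- symmetry facts
  have symmM : ddq t ⬝ᵥ M (q t) *ᵥ dq t = dq t ⬝ᵥ M (q t) *ᵥ ddq t := by
    conv_rhs => rw [dotProduct_mulVec, ← mulVec_transpose, (hMsymm (q t)).eq]
    rw [dotProduct_comm]
  have symmKp : dq t ⬝ᵥ Kp *ᵥ q t = q t ⬝ᵥ Kp *ᵥ dq t := by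
    conv_rhs => rw [dotProduct_mulVec, ← mulVec_transpose, hKpsymm.eq]
    rw [dotProduct_comm]
  -- skew symmetry
  have hsk : (1/2 : ℝ) * (dq t ⬝ᵥ dM t *ᵥ dq t) = dq t ⬝ᵥ Cor t *ᵥ dq t := by
    have := hskew t
    rw [sub_mulVec, dotProduct_sub, sub_eq_zero, smul_mulVec, dotProduct_smul] at this
    simpa using this
  -- dynamics
  have hMddq : M (q t) *ᵥ ddq t = τ t - Cor t *ᵥ dq t - D *ᵥ dq t - G (q t) := by
    have := hdyn t; linear_combination (norm := module) this
  have hdot : dq t ⬝ᵥ M (q t) *ᵥ ddq t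
      = dq t ⬝ᵥ τ t - dq t ⬝ᵥ Cor t *ᵥ dq t - dq t ⬝ᵥ D *ᵥ dq t - dq t ⬝ᵥ G (q t) := by
    rw [hMddq, dotProduct_sub, dotProduct_sub, dotProduct_sub]
  have hτu : dq t ⬝ᵥ τ t ≤ dq t ⬝ᵥ u t :=
    Finset.sum_le_sum fun i _ => hpsat t i
  have hudot : dq t ⬝ᵥ u t = dq t ⬝ᵥ G (q t) - dq t ⬝ᵥ Kp *ᵥ q t - dq t ⬝ᵥ Kd *ᵥ dq t := by
    rw [hu t, dotProduct_sub, dotProduct_sub]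
  have expand : (1/2 : ℝ) * (ddq t ⬝ᵥ M (q t) *ᵥ dq t
        + (dq t ⬝ᵥ dM t *ᵥ dq t + dq t ⬝ᵥ M (q t) *ᵥ ddq t))
      + (1/2 : ℝ) * (dq t ⬝ᵥ Kp *ᵥ q t + q t ⬝ᵥ Kp *ᵥ dq t)
      = dq t ⬝ᵥ τ t - dq t ⬝ᵥ D *ᵥ dq t - dq t ⬝ᵥ G (q t) + dq t ⬝ᵥ Kp *ᵥ q t := by
    linarith [symmM, symmKp, hdot, hsk]
  rw [expand, add_mulVec, dotProduct_add]
  have := hτu.trans_eq hudot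
  linarith
end

section
/- Let V(x) = xᵀQx with Q = Qᵀ > 0 be a Lyapunov function candidate for ẋ = A x + B σ(x), where for each x in a set L, σ(x) lies in the convex hull of {Π(H)x : H ∈ P} for a finite family of matrices Π(H). If for every H in the finite family, (A + BΠ(H))ᵀQ + Q(A + BΠ(H)) is negative definite, then V̇(x) = xᵀ(AᵀQ + QA)x + 2xᵀQBσ(x) < 0 for all nonzero x ∈ L. -/
open Matrix

lemma vertex_expand {n m : ℕ} (A Q : Matrix (Fin n) (Fin n) ℝ)
    (B : Matrix (Fin n) (Fin m) ℝ) (P : Matrix (Fin m) (Fin n) ℝ)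
    (hQ : Qᵀ = Q) (x : Fin n → ℝ) :
    x ⬝ᵥ ((A + B * P)ᵀ * Q + Q * (A + B * P)) *ᵥ x =
      x ⬝ᵥ (Aᵀ * Q + Q * A) *ᵥ x + 2 * (x ⬝ᵥ Q *ᵥ (B *ᵥ (P *ᵥ x))) := by
  have h1 : x ⬝ᵥ ((B * P)ᵀ * Q) *ᵥ x = x ⬝ᵥ Q *ᵥ ((B * P) *ᵥ x) := by
    rw [← mulVec_mulVec, dotProduct_mulVec x (B * P)ᵀ, vecMul_transpose,
      dotProduct_mulVec x Q, ← hQ, vecMul_transpose, hQ, dotProduct_comm]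
  have h2 : x ⬝ᵥ (Q * (B * P)) *ᵥ x = x ⬝ᵥ Q *ᵥ ((B * P) *ᵥ x) := by
    rw [← mulVec_mulVec]
  have h3 : (B * P) *ᵥ x = B *ᵥ (P *ᵥ x) := (mulVec_mulVec ..).symm
  simp only [transpose_add, add_mul, mul_add, add_mulVec, dotProduct_add]
  rw [h1, h2, h3]; ring

/-- Vertex-based Lyapunov decrease: if `σ(x)` lies in the convex hull of the
vertices `Π(H)x` for a finite family `H ∈ P`, and every vertex closed-loop
matrix `A + BΠ(H)` satisfies a strict Lyapunov inequality with common `Q`,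
then `V̇ = xᵀ(AᵀQ + QA)x + 2xᵀQBσ(x) < 0` for all nonzero `x ∈ L`. -/
theorem vertex_lyapunov_decrease {n m : ℕ} {ι : Type*} [Fintype ι] [Nonempty ι]
    (A Q : Matrix (Fin n) (Fin n) ℝ) (B : Matrix (Fin n) (Fin m) ℝ)
    (Pim : ι → Matrix (Fin m) (Fin n) ℝ)
    (L : Set (Fin n → ℝ)) (σ : (Fin n → ℝ) → (Fin m → ℝ))
    (hQ : Q.PosDef)
    (hσ : ∀ x ∈ L, σ x ∈ convexHull ℝ (Set.range fun H : ι => (Pim H) *ᵥ x))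
    (hvert : ∀ H : ι, ∀ x : Fin n → ℝ, x ≠ 0 →
      x ⬝ᵥ ((A + B * Pim H)ᵀ * Q + Q * (A + B * Pim H)) *ᵥ x < 0) :
    ∀ x ∈ L, x ≠ 0 →
      x ⬝ᵥ (Aᵀ * Q + Q * A) *ᵥ x + 2 * (x ⬝ᵥ Q *ᵥ (B *ᵥ σ x)) < 0 := by
  intro x hxL hx0
  have hQs : Qᵀ = Q := hQ.1.eq
  obtain ⟨κ, _, w, z, hw0, hw1, hz, hx⟩ :=
    mem_convexHull_iff_exists_fintype.mp (hσ x hxL)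
  choose f hf using hz
  set c : ℝ := x ⬝ᵥ (Aᵀ * Q + Q * A) *ᵥ x with hc
  have hdsum : ∀ g : κ → (Fin n → ℝ), x ⬝ᵥ (∑ i, g i) = ∑ i, x ⬝ᵥ g i := by
    intro g
    simp only [dotProduct, Finset.sum_apply, Finset.mul_sum]
    rw [Finset.sum_comm]

  have hlin : x ⬝ᵥ Q *ᵥ (B *ᵥ σ x) = ∑ i, w i * (x ⬝ᵥ Q *ᵥ (B *ᵥ (Pim (f i) *ᵥ x))) := by
    rw [← hx]
    have h1 : B *ᵥ (∑ i, w i • z i) = ∑ i, w i • (B *ᵥ z i) := by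
      simp only [← mulVecLin_apply, map_sum, _root_.map_smul]
    have h2 : Q *ᵥ (∑ i, w i • (B *ᵥ z i)) = ∑ i, w i • (Q *ᵥ (B *ᵥ z i)) := by
      simp only [← mulVecLin_apply, map_sum, _root_.map_smul]
    rw [h1, h2, hdsum]
    refine Finset.sum_congr rfl fun i _ => ?_
    rw [← hf i]
    simp [dotProduct_smul, smul_eq_mul]
  have key : c + 2 * (x ⬝ᵥ Q *ᵥ (B *ᵥ σ x))
      = ∑ i, w i * (c + 2 * (x ⬝ᵥ Q *ᵥ (B *ᵥ (Pim (f i) *ᵥ x)))) := by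
    rw [hlin, Finset.mul_sum]
    simp only [mul_add, Finset.sum_add_distrib, ← Finset.sum_mul, hw1, one_mul]
    congr 1
    exact Finset.sum_congr rfl fun i _ => by ring
  rw [key]
  have hv : ∀ i : κ, c + 2 * (x ⬝ᵥ Q *ᵥ (B *ᵥ (Pim (f i) *ᵥ x))) < 0 := by
    intro i
    rw [hc, ← vertex_expand A Q B (Pim (f i)) hQs x]
    exact hvert (f i) x hx0
  have hterm : ∀ i ∈ Finset.univ (α := κ),
      w i * (c + 2 * (x ⬝ᵥ Q *ᵥ (B *ᵥ (Pim (f i) *ᵥ x)))) ≤ (0 : ℝ) :=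
    fun i _ => mul_nonpos_of_nonneg_of_nonpos (hw0 i) (hv i).le
  have hex : ∃ i, 0 < w i := by
    by_contra h
    push_neg at h
    have : ∑ i, w i = 0 := Finset.sum_eq_zero fun i _ => le_antisymm (h i) (hw0 i)
    rw [hw1] at this; norm_num at this
  obtain ⟨i0, hi0⟩ := hex
  have hstrict : w i0 * (c + 2 * (x ⬝ᵥ Q *ᵥ (B *ᵥ (Pim (f i0) *ᵥ x)))) < 0 :=
    mul_neg_of_pos_of_neg hi0 (hv i0)
  have := Finset.sum_lt_sum hterm ⟨i0, Finset.mem_univ i0, hstrict⟩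
  simpa using this
end

section
/- Consider the scalar linear plant m·v̇ = u − d·v (m > 0, d ≥ 0) with control u = psat(−K_p q − K_d v, v), q̇ = v, K_p > 0, K_d > 0, where psat is the lossless power saturation with limit P > 0. Then V(q,v) = ½mv² + ½K_p q² is nonincreasing along trajectories, and strictly decreasing whenever v ≠ 0. -/
/-- Lossless power saturation. -/
noncomputable def psat (P u v : ℝ) : ℝ := if u * v ≤ P then u else P / v

lemma psat_mul_le (P u v : ℝ) (hP : 0 < P) : v * psat P u v ≤ v * u := by
  unfold psat
  split_ifs with h
  · exact le_rfl
  · push_neg at h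
    have hv : v ≠ 0 := by
      rintro rfl
      simp at h
      linarith
    rw [mul_div_cancel₀ _ hv]
    nlinarith [mul_comm u v]

/-- For the scalar plant `m·v̇ = psat(−K_p q − K_d v, v) − d·v`, `q̇ = v`,
the energy `V = ½mv² + ½K_p q²` is nonincreasing along trajectories, and
strictly decreasing whenever `v ≠ 0`. -/
theorem scalar_plant_energy_decrease (m d Kp Kd P : ℝ)
    (hm : 0 < m) (hd : 0 ≤ d) (hKp : 0 < Kp) (hKd : 0 < Kd) (hP : 0 < P)
    (q v : ℝ → ℝ)
    (hq : ∀ t, HasDerivAt q (v t) t)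
    (hv : ∀ t, HasDerivAt v
      ((psat P (-(Kp * q t) - Kd * v t) (v t) - d * v t) / m) t) :
    let V := fun t => (1 / 2) * m * (v t) ^ 2 + (1 / 2) * Kp * (q t) ^ 2
    (∀ s t, s ≤ t → V t ≤ V s) ∧
    (∀ t, ∃ dV : ℝ, HasDerivAt V dV t ∧ dV ≤ 0 ∧ (v t ≠ 0 → dV < 0)) := by
  intro V
  have hVd : ∀ t, HasDerivAt V
      (v t * (psat P (-(Kp * q t) - Kd * v t) (v t) - d * v t)
        + Kp * (q t * v t)) t := by
    intro t
    have h1 := (((hv t).fun_pow 2).const_mul ((1:ℝ)/2 * m))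
    have h2 := (((hq t).fun_pow 2).const_mul ((1:ℝ)/2 * Kp))
    have := h1.add h2
    refine this.congr_deriv ?_
    field_simp
    ring
  have key : ∀ t, (v t * (psat P (-(Kp * q t) - Kd * v t) (v t) - d * v t)
      + Kp * (q t * v t)) ≤ -(Kd + d) * (v t)^2 := by
    intro t
    have := psat_mul_le P (-(Kp * q t) - Kd * v t) (v t) hP
    nlinarith [sq_nonneg (v t)]
  have hle : ∀ t, ∃ dV : ℝ, HasDerivAt V dV t ∧ dV ≤ 0 ∧ (v t ≠ 0 → dV < 0) := by
    intro t
    refine ⟨_, hVd t, ?_, ?_⟩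
    · have := key t
      nlinarith [sq_nonneg (v t)]
    · intro hvne
      have h2 : 0 < (v t)^2 := by positivity
      have := key t
      nlinarith
  refine ⟨?_, hle⟩
  intro s t hst
  have : AntitoneOn V (Set.Icc s t) := by
    apply antitoneOn_of_deriv_nonpos (convex_Icc s t)
    · exact (Differentiable.continuous (fun x => (hVd x).differentiableAt)).continuousOn
    · intro x _
      exact ((hVd x).differentiableAt).differentiableWithinAt
    · intro x _
      rw [(hVd x).deriv]
      have := key x
      nlinarith [sq_nonneg (v x)]
  exact this (Set.left_mem_Icc.mpr hst) (Set.right_mem_Icc.mpr hst) hst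
end
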